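/- Let {L₁,…,L_m} be linear forms in k variables over 𝔽_p, let d₁,…,d_k ≤ d < p, and let λ_{i,j} ∈ 𝔽_p. Then either for every collection of 𝔽_p-linearly independent homogeneous polynomials P₁,…,P_k on 𝔽_p^n of degrees d₁,…,d_k the polynomial Σ_{i,j} λ_{i,j} P_i(L_j(x)) is identically zero, or for every such collection it is not identically zero. That is, vanishing of Σ_{i,j} λ_{i,j} P_i(L_j(x)) depends only on the coefficients λ_{i,j}, the linear forms, and the degrees, not on the particular polynomials. -/

import Mathlib

open MvPolynomial Finset

private lemma coeff_linpow {R : Type*} [CommSemiring R] {κ : Type*} [Fintype κ] [DecidableEq κ]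
    (c : κ → R) (Dg : ℕ) (u : κ →₀ ℕ) (hu : ∑ j', u j' = Dg) :
    MvPolynomial.coeff u ((∑ j', MvPolynomial.C (c j') * MvPolynomial.X j') ^ Dg)
      = (Nat.multinomial Finset.univ ⇑u : R) * ∏ j', c j' ^ u j' := by
  rw [Finset.sum_pow_eq_sum_piAntidiag, MvPolynomial.coeff_sum]
  have hterm : ∀ w : κ → ℕ,
      ((Nat.multinomial Finset.univ w : MvPolynomial κ R) *
        ∏ j', (MvPolynomial.C (c j') * MvPolynomial.X j') ^ w j')
      = monomial (Finsupp.equivFunOnFinite.symm w)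
          ((Nat.multinomial Finset.univ w : R) * ∏ j', c j' ^ w j') := by
    intro w
    have hXprod : (∏ j', (MvPolynomial.X j' : MvPolynomial κ R) ^ w j')
        = monomial (Finsupp.equivFunOnFinite.symm w) (1 : R) := by
      rw [MvPolynomial.monomial_eq, map_one, one_mul, Finsupp.prod_fintype]
      · simp
      · intro i; rfl
    have hCprod : (∏ x, (MvPolynomial.C (c x) : MvPolynomial κ R) ^ w x)
        = MvPolynomial.C (∏ x, c x ^ w x) := by
      simp_rw [← map_pow]
      exact (map_prod (MvPolynomial.C : R →+* MvPolynomial κ R) (fun x => c x ^ w x) Finset.univ).symm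
    simp_rw [mul_pow]
    rw [Finset.prod_mul_distrib, hXprod, hCprod,
      ← map_natCast (MvPolynomial.C : R →+* MvPolynomial κ R), ← mul_assoc, ← map_mul,
      MvPolynomial.C_mul_monomial, mul_one]
  simp_rw [hterm, MvPolynomial.coeff_monomial]
  rw [Finset.sum_eq_single (⇑u)]
  · simp [Finsupp.equivFunOnFinite_symm_coe]
  · intro w hw hne
    rw [if_neg]
    intro hcon
    apply hne
    have := congrArg (fun f : κ →₀ ℕ => ⇑f) hcon
    exact this
  · intro hu'
    exfalso
    apply hu'
    rw [Finset.mem_piAntidiag]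
    exact ⟨hu, fun i _ => Finset.mem_univ i⟩

private lemma multinomial_cast_ne_zero {p d Dg : ℕ} [Fact p.Prime] (hd : d < p) (hDg : Dg ≤ d)
    {κ : Type*} [Fintype κ] (u : κ →₀ ℕ) (hu : ∑ j', u j' = Dg) :
    (Nat.multinomial Finset.univ ⇑u : ZMod p) ≠ 0 := by
  rw [Ne, ZMod.natCast_eq_zero_iff]
  intro hdvd
  have hspec := Nat.multinomial_spec Finset.univ ⇑u
  rw [hu] at hspec
  have hdf : p ∣ Nat.factorial Dg := hspec ▸ hdvd.mul_left _
  have := (Nat.Prime.dvd_factorial Fact.out).mp hdf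
  omega

private lemma eval_mul_smul {R : Type*} [CommSemiring R] {σ : Type*} [Fintype σ]
    {P : MvPolynomial σ R} {D : ℕ} (hP : P.IsHomogeneous D) (c : R) (y : σ → R) :
    MvPolynomial.eval (fun v => c * y v) P = c ^ D * MvPolynomial.eval y P := by
  rw [MvPolynomial.eval_eq', MvPolynomial.eval_eq', Finset.mul_sum]
  apply Finset.sum_congr rfl
  intro u hu
  have hdeg : ∑ v, u v = D := by
    have hdeg' : u.degree = D := by
      by_contra hne
      exact (MvPolynomial.mem_support_iff.mp hu) (hP.coeff_eq_zero hne)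
    rw [← hdeg', Finsupp.degree]
    exact (Finset.sum_subset (Finset.subset_univ _) (by intro x _ hx; simpa using hx)).symm
  simp_rw [mul_pow]
  rw [Finset.prod_mul_distrib, Finset.prod_pow_eq_pow_sum, hdeg]
  ring

private lemma dirB {p n k m K d : ℕ} [Fact p.Prime] (hd : d < p)
    (L : Fin m → Fin k → ZMod p) (D : Fin K → ℕ) (hD : ∀ i, D i ≤ d)
    (lam : Fin K → Fin m → ZMod p)
    (hH : ∀ i, (∑ j, MvPolynomial.C (lam i j) *
        (∑ j', MvPolynomial.C (L j j') * MvPolynomial.X j'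
          : MvPolynomial (Fin k) (ZMod p)) ^ (D i)) = 0)
    (P : Fin K → MvPolynomial (Fin n) (ZMod p)) (hPhom : ∀ i, (P i).IsHomogeneous (D i))
    (x : Fin k → Fin n → ZMod p) :
    (∑ i, ∑ j, lam i j * MvPolynomial.eval (fun v => ∑ j', L j j' * x j' v) (P i)) = 0 := by
  apply Finset.sum_eq_zero
  intro i _
  set g : MvPolynomial (Fin k) (ZMod p) :=
    MvPolynomial.aeval (fun v => ∑ j', MvPolynomial.C (x j' v) * MvPolynomial.X j') (P i) with hg
  have hghom : g.IsHomogeneous (D i) := by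
    have := (hPhom i).aeval (fun v => ∑ j', MvPolynomial.C (x j' v) * MvPolynomial.X j')
      (n := 1)
      (fun v => MvPolynomial.IsHomogeneous.sum _ _ _
        fun j' _ => MvPolynomial.isHomogeneous_C_mul_X _ _)
    simpa only [one_mul, mul_one] using this
  have hev : ∀ j, MvPolynomial.eval (L j) g
      = MvPolynomial.eval (fun v => ∑ j', L j j' * x j' v) (P i) := by
    intro j
    have hcomp := MvPolynomial.comp_aeval_apply
      (f := fun v => ∑ j', MvPolynomial.C (x j' v) * MvPolynomial.X j')
      (MvPolynomial.aeval (L j) : MvPolynomial (Fin k) (ZMod p) →ₐ[ZMod p] ZMod p) (P i)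
    have h1 : MvPolynomial.eval (L j) g
        = MvPolynomial.aeval (L j) (MvPolynomial.aeval
          (fun v => ∑ j', MvPolynomial.C (x j' v) * MvPolynomial.X j') (P i)) := rfl
    rw [h1, hcomp]
    have h2 : (fun v => (MvPolynomial.aeval (L j))
        (∑ j', MvPolynomial.C (x j' v) * MvPolynomial.X j'))
        = fun v => ∑ j', L j j' * x j' v := by
      funext v
      simp [mul_comm]
    rw [h2]
    rfl
  have hb : ∀ u ∈ g.support, (∑ j, lam i j * ∏ j', L j j' ^ u j') = 0 := by
    intro u hu
    have hsum : ∑ j', u j' = D i := by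
      have hdeg' : u.degree = D i := by
        by_contra hne
        exact (MvPolynomial.mem_support_iff.mp hu) (hghom.coeff_eq_zero hne)
      rw [← hdeg', Finsupp.degree]
      exact (Finset.sum_subset (Finset.subset_univ _) (by intro a _ ha; simpa using ha)).symm
    have h0 : MvPolynomial.coeff u (∑ j, MvPolynomial.C (lam i j) *
        (∑ j', MvPolynomial.C (L j j') * MvPolynomial.X j'
          : MvPolynomial (Fin k) (ZMod p)) ^ (D i)) = 0 := by
      rw [hH i]; simp
    rw [MvPolynomial.coeff_sum] at h0
    simp_rw [MvPolynomial.coeff_C_mul, coeff_linpow _ _ _ hsum, ← mul_assoc,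
      mul_comm _ ((Nat.multinomial Finset.univ ⇑u : ZMod p)), mul_assoc, ← Finset.mul_sum] at h0
    exact (mul_eq_zero.mp h0).resolve_left (multinomial_cast_ne_zero hd (hD i) u hsum)
  calc ∑ j, lam i j * MvPolynomial.eval (fun v => ∑ j', L j j' * x j' v) (P i)
      = ∑ j, lam i j * MvPolynomial.eval (L j) g := by
        refine Finset.sum_congr rfl fun j _ => by rw [hev j]
    _ = ∑ j, lam i j * ∑ u ∈ g.support, MvPolynomial.coeff u g * ∏ j', L j j' ^ u j' := by
        simp_rw [MvPolynomial.eval_eq']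
    _ = ∑ u ∈ g.support, MvPolynomial.coeff u g * ∑ j, lam i j * ∏ j', L j j' ^ u j' := by
        simp_rw [Finset.mul_sum]
        rw [Finset.sum_comm]
        refine Finset.sum_congr rfl fun u _ => Finset.sum_congr rfl fun j _ => by ring
    _ = 0 := by
        refine Finset.sum_eq_zero fun u hu => ?_
        rw [hb u hu, mul_zero]

private lemma zmod_poly_eq_zero {p : ℕ} [Fact p.Prime] {σ : Type} [Fintype σ]
    {f : MvPolynomial σ (ZMod p)} (hdeg : f.totalDegree < p)
    (h : ∀ v : σ → ZMod p, MvPolynomial.eval v f = 0) : f = 0 := by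
  classical
  apply MvPolynomial.eq_zero_of_eval_eq_zero σ (ZMod p) f h
  rw [MvPolynomial.mem_restrictDegree_iff_sup]
  intro i
  have h1 : f.degrees.count i ≤ f.totalDegree := by
    rw [← MvPolynomial.degreeOf_def]; exact MvPolynomial.degreeOf_le_totalDegree f i
  have h2 : f.degrees.count i < p := lt_of_le_of_lt h1 hdeg
  rw [ZMod.card]
  omega

private lemma dirA {p n k m K d : ℕ} [Fact p.Prime] (hd : d < p)
    (L : Fin m → Fin k → ZMod p) (D : Fin K → ℕ) (hD : ∀ i, D i ≤ d)
    (lam : Fin K → Fin m → ZMod p)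
    (P : Fin K → MvPolynomial (Fin n) (ZMod p)) (hPhom : ∀ i, (P i).IsHomogeneous (D i))
    (hPind : LinearIndependent (ZMod p) P)
    (hvan : ∀ x : Fin k → Fin n → ZMod p,
      (∑ i, ∑ j, lam i j * MvPolynomial.eval (fun v => ∑ j', L j j' * x j' v) (P i)) = 0)
    (i : Fin K) :
    (∑ j, MvPolynomial.C (lam i j) *
        (∑ j', MvPolynomial.C (L j j') * MvPolynomial.X j'
          : MvPolynomial (Fin k) (ZMod p)) ^ (D i)) = 0 := by
  apply zmod_poly_eq_zero (lt_of_le_of_lt ?degbound hd)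
  case degbound =>
    apply MvPolynomial.totalDegree_finsetSum_le
    intro j _
    calc (MvPolynomial.C (lam i j) *
        (∑ j', MvPolynomial.C (L j j') * MvPolynomial.X j'
          : MvPolynomial (Fin k) (ZMod p)) ^ (D i)).totalDegree
        ≤ (MvPolynomial.C (lam i j) : MvPolynomial (Fin k) (ZMod p)).totalDegree +
          ((∑ j', MvPolynomial.C (L j j') * MvPolynomial.X j'
          : MvPolynomial (Fin k) (ZMod p)) ^ (D i)).totalDegree :=
          MvPolynomial.totalDegree_mul _ _
      _ ≤ d := by
          rw [MvPolynomial.totalDegree_C, zero_add]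
          calc ((∑ j', MvPolynomial.C (L j j') * MvPolynomial.X j'
              : MvPolynomial (Fin k) (ZMod p)) ^ (D i)).totalDegree
              ≤ (D i) * (∑ j', MvPolynomial.C (L j j') * MvPolynomial.X j'
                : MvPolynomial (Fin k) (ZMod p)).totalDegree :=
                MvPolynomial.totalDegree_pow _ _
            _ ≤ (D i) * 1 := by
                apply Nat.mul_le_mul_left
                apply MvPolynomial.totalDegree_finsetSum_le
                intro j' _
                calc (MvPolynomial.C (L j j') * MvPolynomial.X j'
                    : MvPolynomial (Fin k) (ZMod p)).totalDegree
                    ≤ _ + _ := MvPolynomial.totalDegree_mul _ _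
                  _ ≤ 1 := by
                      rw [MvPolynomial.totalDegree_C, zero_add, MvPolynomial.totalDegree_X]
            _ ≤ d := by simpa using hD i
  intro t
  -- the coefficients
  set c : Fin K → ZMod p := fun i' => ∑ j, lam i' j * (∑ j', L j j' * t j') ^ (D i') with hc
  have heval : MvPolynomial.eval t (∑ j, MvPolynomial.C (lam i j) *
        (∑ j', MvPolynomial.C (L j j') * MvPolynomial.X j'
          : MvPolynomial (Fin k) (ZMod p)) ^ (D i)) = c i := by
    simp [hc]
  rw [heval]
  -- the vanishing of eval y (∑ c i' • P i')
  have key : ∀ y : Fin n → ZMod p,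
      MvPolynomial.eval y (∑ i', c i' • P i') = 0 := by
    intro y
    have hv := hvan (fun j' v => t j' * y v)
    have hrw : ∀ i' j, MvPolynomial.eval
        (fun v => ∑ j', L j j' * (t j' * y v)) (P i')
        = (∑ j', L j j' * t j') ^ (D i') * MvPolynomial.eval y (P i') := by
      intro i' j
      have hfun : (fun v => ∑ j', L j j' * (t j' * y v))
          = fun v => (∑ j', L j j' * t j') * y v := by
        funext v
        rw [Finset.sum_mul]
        exact Finset.sum_congr rfl fun j' _ => by ring
      rw [hfun, eval_mul_smul (hPhom i')]
    simp_rw [hrw] at hv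
    rw [map_sum]
    simp_rw [MvPolynomial.smul_eval, hc]
    rw [← hv]
    refine Finset.sum_congr rfl fun i' _ => ?_
    rw [Finset.sum_mul]
    exact Finset.sum_congr rfl fun j _ => by ring
  have hQ : (∑ i', c i' • P i') = 0 := by
    apply zmod_poly_eq_zero (lt_of_le_of_lt ?degbound2 hd) key
    case degbound2 =>
      apply MvPolynomial.totalDegree_finsetSum_le
      intro i' _
      exact le_trans (MvPolynomial.totalDegree_smul_le _ _)
        (le_trans ((hPhom i').totalDegree_le) (hD i'))
  exact Fintype.linearIndependent_iff.mp hPind c hQ i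

/-- Whether `∑_{i,j} λ_{i,j} P_i(L_j(x))` vanishes identically depends only on the
coefficients `λ`, the linear forms `L_j` and the degrees `d_i` of the linearly
independent homogeneous polynomials `P_i`, not on the polynomials themselves: either
every such collection gives the zero function, or none does. -/
theorem vanishing_depends_only_on_degrees {p n k m K d : ℕ} [Fact p.Prime] (hd : d < p)
    (L : Fin m → Fin k → ZMod p) (D : Fin K → ℕ) (hD : ∀ i, D i ≤ d)
    (lam : Fin K → Fin m → ZMod p) :
    (∀ P : Fin K → MvPolynomial (Fin n) (ZMod p),
        (∀ i, (P i).IsHomogeneous (D i)) → LinearIndependent (ZMod p) P →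
        ∀ x : Fin k → Fin n → ZMod p,
          (∑ i : Fin K, ∑ j : Fin m,
            lam i j * MvPolynomial.eval
              (fun v : Fin n => ∑ j' : Fin k, L j j' * x j' v) (P i)) = 0) ∨
    (∀ P : Fin K → MvPolynomial (Fin n) (ZMod p),
        (∀ i, (P i).IsHomogeneous (D i)) → LinearIndependent (ZMod p) P →
        ¬ ∀ x : Fin k → Fin n → ZMod p,
          (∑ i : Fin K, ∑ j : Fin m,
            lam i j * MvPolynomial.eval
              (fun v : Fin n => ∑ j' : Fin k, L j j' * x j' v) (P i)) = 0) := by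
  by_cases hS : ∀ i, (∑ j, MvPolynomial.C (lam i j) *
      (∑ j', MvPolynomial.C (L j j') * MvPolynomial.X j'
        : MvPolynomial (Fin k) (ZMod p)) ^ (D i)) = 0
  · left
    intro P hhom _ x
    exact dirB hd L D hD lam hS P hhom x
  · right
    intro P hhom hind hvan
    exact hS fun i => dirA hd L D hD lam P hhom hind hvan i
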